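/- (Lemma 3 of the paper.) For every t ∈ ℕ with t + 1 ≥ D, and i ∈ {1,2} with j the other index, the information set satisfies the recursion I_i(t+1) = I_i(t) ∪ {(i, t+1)} ∪ I_j(t+1−e_j(t+1)). (Note t+1−e_j(t+1) ≥ 0 since e_j(t+1) ≤ D ≤ t+1.) -/

import Mathlib

/-- Lemma 3 of the paper: for `t + 1 ≥ D`, the information set satisfies
`I i (t+1) = I i t ∪ {(i, t+1)} ∪ I (i+1) (t+1 − e (i+1) (t+1))`,
where `i + 1 : Fin 2` is the other controller. -/
theorem stmt_4 (D : ℕ) (hD : 1 ≤ D) (d : Fin 2 → ℕ → ℕ)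
    (hd : ∀ i τ, 1 ≤ d i τ ∧ d i τ ≤ D)
    (e : Fin 2 → ℕ → ℕ)
    (he : ∀ i t, e i t =
      (Finset.Icc (t - (D - 1)) t).inf' (Finset.nonempty_Icc.mpr (Nat.sub_le t (D - 1)))
        (fun τ => d i τ + (t - τ)))
    (I : Fin 2 → ℕ → Set (Fin 2 × ℕ))
    (hI0 : ∀ i, I i 0 = {(i, 0)})
    (hIrec : ∀ i t, I i (t + 1) =
      I i t ∪ {(i, t + 1)} ∪
        {p : Fin 2 × ℕ | p.1 = i + 1 ∧ p.2 + d (i + 1) (t + 1) ≤ t + 1}) :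
    ∀ i t, D ≤ t + 1 →
      I i (t + 1) = I i t ∪ {(i, t + 1)} ∪ I (i + 1) (t + 1 - e (i + 1) (t + 1)) := by
  have hcase : ∀ a i : Fin 2, a = i ∨ a = i + 1 := by decide
  have hne : ∀ i : Fin 2, i + 1 ≠ i := by decide
  have hii : ∀ i : Fin 2, i + 1 + 1 = i := by decide
  -- characterization of the information sets
  have hchar : ∀ i t, I i t =
      {p : Fin 2 × ℕ | p.1 = i ∧ p.2 ≤ t} ∪
      {p : Fin 2 × ℕ | p.1 = i + 1 ∧ ∃ τ, 1 ≤ τ ∧ τ ≤ t ∧ p.2 + d (i + 1) τ ≤ τ} := by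
    intro i t
    induction t with
    | zero =>
      rw [hI0]
      ext ⟨a, k⟩
      simp only [Set.mem_singleton_iff, Prod.ext_iff, Set.mem_union, Set.mem_setOf_eq,
        Nat.le_zero]
      constructor
      · rintro ⟨ha, hk⟩; exact Or.inl ⟨ha, hk⟩
      · rintro (⟨ha, hk⟩ | ⟨_, τ, h1, h0, _⟩)
        · exact ⟨ha, hk⟩
        · omega
    | succ t ih =>
      rw [hIrec, ih]
      ext ⟨a, k⟩
      simp only [Set.mem_union, Set.mem_setOf_eq, Set.mem_singleton_iff, Prod.ext_iff]
      constructor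
      · rintro (((⟨ha, hk⟩ | ⟨ha, τ, h1, h2, h3⟩) | ⟨ha, hk⟩) | ⟨ha, hk⟩)
        · exact Or.inl ⟨ha, hk.trans (Nat.le_succ t)⟩
        · exact Or.inr ⟨ha, τ, h1, h2.trans (Nat.le_succ t), h3⟩
        · exact Or.inl ⟨ha, hk.le⟩
        · exact Or.inr ⟨ha, t + 1, Nat.succ_le_succ (Nat.zero_le t), le_rfl, hk⟩
      · rintro (⟨ha, hk⟩ | ⟨ha, τ, h1, h2, h3⟩)
        · rcases Nat.lt_or_ge k (t + 1) with h | h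
          · exact Or.inl (Or.inl (Or.inl ⟨ha, Nat.lt_succ_iff.mp h⟩))
          · exact Or.inl (Or.inr ⟨ha, le_antisymm hk h⟩)
        · rcases Nat.lt_or_ge τ (t + 1) with h | h
          · exact Or.inl (Or.inl (Or.inr ⟨ha, τ, h1, Nat.lt_succ_iff.mp h, h3⟩))
          · have : τ = t + 1 := le_antisymm h2 h
            subst this
            exact Or.inr ⟨ha, h3⟩
  intro i t ht
  set j := i + 1 with hj
  -- facts about e j (t+1)
  have hmem : t + 1 ∈ Finset.Icc (t + 1 - (D - 1)) (t + 1) :=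
    Finset.mem_Icc.mpr ⟨Nat.sub_le _ _, le_rfl⟩
  have hle : e j (t + 1) ≤ d j (t + 1) := by
    rw [he]
    have := Finset.inf'_le (fun τ => d j τ + (t + 1 - τ)) hmem
    simpa only [Nat.sub_self, add_zero] using this
  obtain ⟨τ₀, hτ₀mem, hτ₀⟩ := Finset.exists_mem_eq_inf'
    (Finset.nonempty_Icc.mpr (Nat.sub_le (t+1) (D - 1)))
    (fun τ => d j τ + (t + 1 - τ))
  rw [← he] at hτ₀
  obtain ⟨hτ₀l, hτ₀r⟩ := Finset.mem_Icc.mp hτ₀mem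
  have hτ₀1 : 1 ≤ τ₀ := by omega
  set s := t + 1 - e j (t + 1) with hs
  rw [hchar i (t + 1), hchar i t, hchar j s]
  ext ⟨a, k⟩
  simp only [Set.mem_union, Set.mem_setOf_eq, Set.mem_singleton_iff, Prod.ext_iff, hii]
  rcases hcase a i with ha | ha
  · -- a = i
    simp only [Set.mem_setOf_eq, ha, true_and, (hne i).symm, false_and, or_false, false_or,
      ← hj, show i ≠ j from (hne i).symm, show j + 1 = i from hii i]
    have hs' : s ≤ t + 1 := Nat.sub_le _ _
    constructor
    · intro h; omega
    · rintro ((h | h) | ⟨τ, h1, h2, h3⟩)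
      · omega
      · omega
      · have := (hd i τ).1
        omega
  · -- a = j
    simp only [Set.mem_setOf_eq, ha, ← hj, hne i, false_and, true_and, or_false, false_or,
      hne j, and_false, show j ≠ i from hne i, show j ≠ j + 1 from (hne j).symm]
    constructor
    · rintro ⟨τ, h1, h2, h3⟩
      rcases Nat.lt_or_ge τ (t + 1) with h | h
      · exact Or.inl ⟨τ, h1, Nat.lt_succ_iff.mp h, h3⟩
      · have : τ = t + 1 := le_antisymm h2 h
        subst this
        right
        omega
    · rintro (⟨τ, h1, h2, h3⟩ | hk)
      · exact ⟨τ, h1, h2.trans (Nat.le_succ t), h3⟩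
      · by_cases hk0 : k = 0
        · subst hk0
          refine ⟨t + 1, Nat.succ_le_succ (Nat.zero_le t), le_rfl, ?_⟩
          have := (hd j (t + 1)).2
          omega
        · refine ⟨τ₀, hτ₀1, hτ₀r, ?_⟩
          omega
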